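/- Let H be a Hilbert space, J ∈ B(H) skew-adjoint, R ∈ B(H) self-adjoint nonnegative. Define C₀ = √R and iterated commutators C_{j+1} = J C_j − C_j J. Then for every k ∈ ℕ, the range of C_k is contained in the span of the union over j = 0,…,k of the ranges of J^j ∘ √R, and conversely the range of J^k ∘ √R is contained in the span of the union over j = 0,…,k of the ranges of C_j. -/

import Mathlib

open ContinuousLinearMap
open scoped InnerProductSpace

/-- with `C₀ = √R` and iterated commutators `C_{j+1} = J C_j − C_j J`, for every
`k` the range of `C_k` lies in the span of the ranges of `J^j ∘ √R`, `j ≤ k`, and conversely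
the range of `J^k ∘ √R` lies in the span of the ranges of `C_j`, `j ≤ k`. -/
theorem range_commutator_subset_span_and_conversely
    {H : Type*} [NormedAddCommGroup H] [InnerProductSpace ℂ H]
    [CompleteSpace H] [TopologicalSpace.SeparableSpace H]
    (J R S : H →L[ℂ] H)
    (hJ : ContinuousLinearMap.adjoint J = -J)
    (hR : R.IsPositive)
    (hS : S.IsPositive) (hS2 : S * S = R)
    (Cseq : ℕ → (H →L[ℂ] H))
    (hC0 : Cseq 0 = S)
    (hCsucc : ∀ j : ℕ, Cseq (j + 1) = J * Cseq j - Cseq j * J) :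
    ∀ k : ℕ,
      (LinearMap.range (Cseq k : H →ₗ[ℂ] H) ≤
        Submodule.span ℂ (⋃ j ∈ Finset.range (k + 1), Set.range ⇑((J ^ j) ∘L S))) ∧
      (LinearMap.range ((J ^ k) ∘L S : H →ₗ[ℂ] H) ≤
        Submodule.span ℂ (⋃ j ∈ Finset.range (k + 1), Set.range ⇑(Cseq j))) := by
  -- notation for the two families of sets
  set s : ℕ → Set H := fun k => ⋃ j ∈ Finset.range (k + 1), Set.range ⇑((J ^ j) ∘L S) with hs
  set t : ℕ → Set H := fun k => ⋃ j ∈ Finset.range (k + 1), Set.range ⇑(Cseq j) with ht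
  have smono : ∀ k, s k ⊆ s (k + 1) := by
    intro k
    intro x hx
    simp only [hs, Set.mem_iUnion, Finset.mem_range] at hx ⊢
    obtain ⟨j, hj, h⟩ := hx
    exact ⟨j, by omega, h⟩
  have tmono : ∀ k, t k ⊆ t (k + 1) := by
    intro k
    intro x hx
    simp only [ht, Set.mem_iUnion, Finset.mem_range] at hx ⊢
    obtain ⟨j, hj, h⟩ := hx
    exact ⟨j, by omega, h⟩
  intro k
  induction k with
  | zero =>
    constructor
    · rintro x ⟨y, rfl⟩
      apply Submodule.subset_span
      simp only [hs, Set.mem_iUnion]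
      exact ⟨0, by simp, y, by simp [hC0]⟩
    · rintro x ⟨y, rfl⟩
      apply Submodule.subset_span
      simp only [ht, Set.mem_iUnion]
      exact ⟨0, by simp, y, by simp [hC0]⟩
  | succ k ih =>
    obtain ⟨ih1, ih2⟩ := ih
    constructor
    · -- range of C_{k+1}
      rintro x ⟨y, rfl⟩
      rw [hCsucc]
      have : (J * Cseq k - Cseq k * J) y = J (Cseq k y) - Cseq k (J y) := rfl
      rw [coe_coe, this]
      apply sub_mem
      · -- J (C_k y)
        have h1 : Cseq k y ∈ Submodule.span ℂ (s k) := ih1 ⟨y, rfl⟩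
        have h2 : J (Cseq k y) ∈ (Submodule.span ℂ (s k)).map (J : H →ₗ[ℂ] H) :=
          ⟨_, h1, rfl⟩
        rw [Submodule.map_span] at h2
        refine Submodule.span_mono ?_ h2
        rintro z ⟨w, hw, rfl⟩
        simp only [hs, Set.mem_iUnion] at hw ⊢
        obtain ⟨j, hj, v, hv⟩ := hw
        simp only [Finset.mem_range] at hj
        refine ⟨j + 1, by simp only [Finset.mem_range]; omega, v, ?_⟩
        simp only [coe_comp', Function.comp_apply] at hv ⊢
        rw [pow_succ']
        simp only [mul_apply_eq_comp]
        rw [hv]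
        rfl
      · exact Submodule.span_mono (smono k) (ih1 ⟨J y, rfl⟩)
    · -- range of J^{k+1} ∘ S
      rintro x ⟨y, rfl⟩
      have hx : ((J ^ (k + 1)) ∘L S) y = J (((J ^ k) ∘L S) y) := by
        simp only [coe_comp', Function.comp_apply, pow_succ', mul_apply_eq_comp]
      rw [coe_coe, hx]
      have h1 : ((J ^ k) ∘L S) y ∈ Submodule.span ℂ (t k) := ih2 ⟨y, rfl⟩
      have h2 : J (((J ^ k) ∘L S) y) ∈ (Submodule.span ℂ (t k)).map (J : H →ₗ[ℂ] H) :=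
        ⟨_, h1, rfl⟩
      rw [Submodule.map_span] at h2
      have himg : (⇑J : H → H) '' t k ⊆ ↑(Submodule.span ℂ (t (k + 1))) := by
        rintro z ⟨w, hw, rfl⟩
        simp only [ht, Set.mem_iUnion] at hw
        obtain ⟨j, hj, v, hv⟩ := hw
        simp only [Finset.mem_range] at hj
        have key : J (Cseq j v) = Cseq (j + 1) v + Cseq j (J v) := by
          rw [hCsucc j]
          simp only [sub_apply, mul_apply_eq_comp]
          abel
        rw [← hv, key]
        apply add_mem
        · apply Submodule.subset_span
          simp only [ht, Set.mem_iUnion]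
          exact ⟨j + 1, by simp only [Finset.mem_range]; omega, v, rfl⟩
        · apply Submodule.subset_span
          simp only [ht, Set.mem_iUnion]
          exact ⟨j, by simp only [Finset.mem_range]; omega, J v, rfl⟩
      exact Submodule.span_le.mpr himg h2
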